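/- For every real α > 2, lim_{x→∞} x^(2/α) · P_α(x) = (α/(2π))·sin(2π/α); in particular the lower bound of Lemma 2 is asymptotically tight as x → ∞. -/

import Mathlib

open MeasureTheory Filter Real Set

/-- The closed-form downlink SIR coverage denominator:
`h α x = 1 + ∫_1^∞ x / (x + w^(α/2)) dw`. -/
noncomputable def hcov (α x : ℝ) : ℝ := 1 + ∫ w in Set.Ioi (1 : ℝ), x / (x + w ^ (α / 2))

/-- The SIR coverage function `P_α(x) = h_α(x)⁻¹`. -/
noncomputable def Pcov (α x : ℝ) : ℝ := (hcov α x)⁻¹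

-- integrability
lemma aux_integrable {p : ℝ} (hp : 1 < p) :
    IntegrableOn (fun u : ℝ => (1 + u ^ p)⁻¹) (Ioi (0:ℝ)) := by
  have hmeas : Measurable (fun u : ℝ => (1 + u ^ p)⁻¹) :=
    ((measurable_const.add (measurable_id.pow_const p)).inv)
  have h1 : IntegrableOn (fun u : ℝ => (1 + u ^ p)⁻¹) (Ioc (0:ℝ) 1) := by
    apply Integrable.mono' (integrable_const (1:ℝ)) hmeas.aestronglyMeasurable.restrict
    refine (ae_restrict_iff' measurableSet_Ioc).2 (Filter.Eventually.of_forall fun u hu => ?_)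
    have h0 : (0:ℝ) ≤ u ^ p := Real.rpow_nonneg hu.1.le p
    rw [Real.norm_eq_abs, abs_inv, abs_of_nonneg (by linarith)]
    rw [inv_le_one_iff₀]
    right; linarith
  have h2 : IntegrableOn (fun u : ℝ => (1 + u ^ p)⁻¹) (Ioi (1:ℝ)) := by
    apply Integrable.mono' (integrableOn_Ioi_rpow_of_lt (by linarith : -p < -1) one_pos)
      hmeas.aestronglyMeasurable.restrict
    refine (ae_restrict_iff' measurableSet_Ioi).2 (Filter.Eventually.of_forall fun u hu => ?_)
    have hu0 : (0:ℝ) < u := lt_trans one_pos hu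
    have h0 : (0:ℝ) < u ^ p := Real.rpow_pos_of_pos hu0 p
    rw [Real.norm_eq_abs, abs_inv, abs_of_nonneg (by linarith), Real.rpow_neg hu0.le]
    exact inv_anti₀ h0 (by linarith)
  have := h1.union h2
  rwa [Ioc_union_Ioi_eq_Ioi (zero_le_one)] at this

lemma beta_val {δ : ℝ} (h0 : 0 < δ) (h1 : δ < 1) :
    ∫ x in Ioo (0:ℝ) 1, x ^ (δ - 1) * (1 - x) ^ (-δ) = π / Real.sin (π * δ) := by
  have hb : Complex.betaIntegral δ (1 - δ) = ↑(∫ x in (0:ℝ)..1, x ^ (δ - 1) * (1 - x) ^ (-δ)) := by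
    rw [Complex.betaIntegral, ← intervalIntegral.integral_ofReal]
    apply intervalIntegral.integral_congr
    intro x hx
    rw [uIcc_of_le zero_le_one] at hx
    have hx0 : (0:ℝ) ≤ x := hx.1
    have hx1 : (0:ℝ) ≤ 1 - x := by linarith [hx.2]
    show (x:ℂ) ^ ((δ:ℂ) - 1) * (1 - (x:ℂ)) ^ (1 - (δ:ℂ) - 1) = ((x ^ (δ - 1) * (1 - x) ^ (-δ) : ℝ) : ℂ)
    rw [Complex.ofReal_mul, Complex.ofReal_cpow hx0, Complex.ofReal_cpow hx1]
    push_cast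
    ring_nf
  have hg : Complex.betaIntegral δ (1 - δ) = ↑(π / Real.sin (π * δ)) := by
    have h := Complex.Gamma_mul_Gamma_eq_betaIntegral
      (s := (δ:ℂ)) (t := ((1 - δ : ℝ) :ℂ)) (by simpa using h0) (by simp; linarith)
    have h2 := Complex.Gamma_mul_Gamma_one_sub (δ:ℂ)
    push_cast at h ⊢
    rw [show (δ:ℂ) + (1 - δ) = 1 by ring, Complex.Gamma_one, one_mul] at h
    rw [← h, h2]
  rw [hb] at hg
  have := Complex.ofReal_injective hg
  rw [← this, intervalIntegral.integral_of_le zero_le_one, integral_Ioc_eq_integral_Ioo]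

lemma subst1 {δ : ℝ} (h0 : 0 < δ) (h1 : δ < 1) :
    ∫ x in Ioo (0:ℝ) 1, x ^ (δ - 1) * (1 - x) ^ (-δ)
      = ∫ t in Ioi (0:ℝ), t ^ (δ - 1) * (1 + t)⁻¹ := by
  have himg : (fun t : ℝ => t / (1 + t)) '' Ioi 0 = Ioo 0 1 := by
    ext y
    constructor
    · rintro ⟨t, ht, rfl⟩
      have h1t : (0:ℝ) < 1 + t := by linarith [mem_Ioi.1 ht]
      constructor
      · exact div_pos (mem_Ioi.1 ht) h1t
      · rw [div_lt_one h1t]; linarith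
    · rintro ⟨hy0, hy1⟩
      refine ⟨y / (1 - y), ?_, ?_⟩
      · exact mem_Ioi.2 (div_pos hy0 (by linarith))
      · have hne : (1:ℝ) - y ≠ 0 := by linarith
        show (y / (1 - y)) / (1 + y / (1 - y)) = y
        rw [show 1 + y/(1-y) = 1/(1-y) by field_simp; ring]
        field_simp
  have hderiv : ∀ t ∈ Ioi (0:ℝ), HasDerivWithinAt (fun t : ℝ => t / (1 + t))
      ((1 + t)^2)⁻¹ (Ioi 0) t := by
    intro t ht
    have h1t : (1 + t) ≠ 0 := by have := mem_Ioi.1 ht; positivity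
    have := (hasDerivAt_id t).div ((hasDerivAt_id t).const_add 1) h1t
    simp only [one_mul, mul_one, id] at this
    have e : ((1 + t)^2)⁻¹ = (1 + t - t) / (1 + t) ^ 2 := by ring
    rw [e]; exact this.hasDerivWithinAt
  have hinj : InjOn (fun t : ℝ => t / (1 + t)) (Ioi 0) := by
    intro a ha b hb hab
    have ha1 : (1 + a) ≠ 0 := by have := mem_Ioi.1 ha; positivity
    have hb1 : (1 + b) ≠ 0 := by have := mem_Ioi.1 hb; positivity
    field_simp at hab
    linarith
  rw [← himg, integral_image_eq_integral_abs_deriv_smul measurableSet_Ioi hderiv hinj]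
  apply setIntegral_congr_fun measurableSet_Ioi
  intro t ht
  have ht0 : (0:ℝ) < t := mem_Ioi.1 ht
  have h1t : (0:ℝ) < 1 + t := by linarith
  have e1 : 1 - t / (1 + t) = (1 + t)⁻¹ := by field_simp; ring
  have e2 : (t / (1 + t)) ^ (δ - 1) = t ^ (δ - 1) * ((1 + t) ^ (δ - 1))⁻¹ := by
    rw [Real.div_rpow ht0.le h1t.le, div_eq_mul_inv]
  have e3 : ((1 + t)⁻¹) ^ (-δ) = (1 + t) ^ δ := by
    rw [Real.inv_rpow h1t.le, ← Real.rpow_neg h1t.le, neg_neg]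
  simp only [smul_eq_mul]
  rw [e1, e2, e3, abs_of_pos (by positivity)]
  have e4 : ((1 + t) ^ (δ - 1))⁻¹ * (1 + t) ^ δ = (1 + t) ^ (1:ℝ) := by
    rw [← Real.rpow_neg h1t.le, ← Real.rpow_add h1t]
    ring_nf
  have e5 : ((1 + t) ^ 2)⁻¹ * (1+t) = (1+t)⁻¹ := by
    field_simp
  have e6 : ((1 + t) ^ (δ - 1))⁻¹ * ((1 + t) ^ δ * ((1 + t) ^ 2)⁻¹) = (1+t)⁻¹ := by
    rw [← mul_assoc, e4, Real.rpow_one]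
    field_simp
  have e7 : (1 + t) ^ δ = (1 + t) ^ (δ - 1) * (1 + t) := by
    nth_rewrite 1 [show δ = (δ - 1) + 1 by ring]
    rw [Real.rpow_add h1t, Real.rpow_one]
  have hA : (1 + t) ^ (δ - 1) ≠ 0 := (Real.rpow_pos_of_pos h1t _).ne'
  rw [e7]
  field_simp

lemma subst2 {p δ : ℝ} (hp : 1 < p) (hpδ : p * δ = 1) :
    ∫ t in Ioi (0:ℝ), t ^ (δ - 1) * (1 + t)⁻¹
      = p * ∫ u in Ioi (0:ℝ), (1 + u ^ p)⁻¹ := by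
  have hp0 : (0:ℝ) < p := by linarith
  have himg : (fun u : ℝ => u ^ p) '' Ioi 0 = Ioi 0 := by
    ext y
    constructor
    · rintro ⟨u, hu, rfl⟩
      exact Real.rpow_pos_of_pos (mem_Ioi.1 hu) p
    · intro hy
      exact ⟨y ^ p⁻¹, Real.rpow_pos_of_pos (mem_Ioi.1 hy) _,
        Real.rpow_inv_rpow (mem_Ioi.1 hy).le hp0.ne'⟩
  have hderiv : ∀ u ∈ Ioi (0:ℝ), HasDerivWithinAt (fun u : ℝ => u ^ p)
      (p * u ^ (p - 1)) (Ioi 0) u := by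
    intro u hu
    exact (Real.hasDerivAt_rpow_const (Or.inl (mem_Ioi.1 hu).ne')).hasDerivWithinAt
  have hinj : InjOn (fun u : ℝ => u ^ p) (Ioi 0) := by
    intro a ha b hb hab
    have := Real.rpow_left_injOn (x := p) hp0.ne'
    exact this (mem_Ioi.1 ha).le (mem_Ioi.1 hb).le hab
  nth_rewrite 1 [← himg]
  rw [integral_image_eq_integral_abs_deriv_smul measurableSet_Ioi hderiv hinj,
    ← MeasureTheory.integral_const_mul]
  apply setIntegral_congr_fun measurableSet_Ioi
  intro u hu
  have hu0 : (0:ℝ) < u := mem_Ioi.1 hu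
  have e1 : (u ^ p) ^ (δ - 1) = u ^ (1 - p) := by
    rw [← Real.rpow_mul hu0.le]
    congr 1
    nlinarith
  simp only [smul_eq_mul]
  rw [e1, abs_of_pos (by positivity)]
  have e2 : u ^ (p - 1) * u ^ (1 - p) = 1 := by
    rw [← Real.rpow_add hu0]
    norm_num
  calc p * u ^ (p - 1) * (u ^ (1 - p) * (1 + u ^ p)⁻¹)
      = p * (u ^ (p - 1) * u ^ (1 - p)) * (1 + u ^ p)⁻¹ := by ring
    _ = p * (1 + u ^ p)⁻¹ := by rw [e2, mul_one]

lemma subst3 {p δ x : ℝ} (hp : 1 < p) (hpδ : p * δ = 1) (hx : 0 < x) :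
    ∫ w in Ioi (1:ℝ), x / (x + w ^ p)
      = x ^ δ * ∫ u in Ioi (x ^ (-δ)), (1 + u ^ p)⁻¹ := by
  have hp0 : (0:ℝ) < p := by linarith
  have hxd : (0:ℝ) < x ^ δ := Real.rpow_pos_of_pos hx δ
  have hxnd : (0:ℝ) < x ^ (-δ) := Real.rpow_pos_of_pos hx _
  have hkey : x ^ δ * x ^ (-δ) = 1 := by
    rw [← Real.rpow_add hx]; norm_num
  have himg : (fun u : ℝ => x ^ δ * u) '' Ioi (x ^ (-δ)) = Ioi 1 := by
    ext y
    constructor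
    · rintro ⟨u, hu, rfl⟩
      have : x ^ δ * x ^ (-δ) < x ^ δ * u := by
        exact mul_lt_mul_of_pos_left (mem_Ioi.1 hu) hxd
      rwa [hkey] at this
    · intro hy
      refine ⟨(x ^ δ)⁻¹ * y, ?_, by field_simp⟩
      rw [mem_Ioi]
      have : (x ^ δ)⁻¹ * 1 < (x ^ δ)⁻¹ * y := by
        exact mul_lt_mul_of_pos_left (mem_Ioi.1 hy) (by positivity)
      rw [mul_one] at this
      calc x ^ (-δ) = (x ^ δ)⁻¹ * (x ^ δ * x ^ (-δ)) := by field_simp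
        _ = (x ^ δ)⁻¹ * 1 := by rw [hkey]
        _ < (x ^ δ)⁻¹ * y := by rwa [mul_one]
  have hderiv : ∀ u ∈ Ioi (x ^ (-δ)), HasDerivWithinAt (fun u : ℝ => x ^ δ * u)
      (x ^ δ) (Ioi (x ^ (-δ))) u := by
    intro u hu
    simpa using ((hasDerivAt_id u).const_mul (x ^ δ)).hasDerivWithinAt
  have hinj : InjOn (fun u : ℝ => x ^ δ * u) (Ioi (x ^ (-δ))) :=
    fun a _ b _ h => by
      simpa [mul_right_inj' hxd.ne'] using h
  rw [← himg, integral_image_eq_integral_abs_deriv_smul measurableSet_Ioi hderiv hinj,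
    ← MeasureTheory.integral_const_mul]
  apply setIntegral_congr_fun measurableSet_Ioi
  intro u hu
  have hu0 : (0:ℝ) < u := lt_trans hxnd (mem_Ioi.1 hu)
  have e1 : (x ^ δ * u) ^ p = x * u ^ p := by
    rw [Real.mul_rpow hxd.le hu0.le, ← Real.rpow_mul hx.le, show δ * p = 1 by linarith [hpδ]; , Real.rpow_one]
  simp only [smul_eq_mul]
  rw [e1, abs_of_pos hxd]
  have : x + x * u ^ p = x * (1 + u ^ p) := by ring
  rw [this]
  congr 1
  field_simp

lemma tail_tendsto {p δ : ℝ} (hp : 1 < p) (hδ : 0 < δ) :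
    Tendsto (fun x : ℝ => ∫ u in Ioi (x ^ (-δ)), (1 + u ^ p)⁻¹) atTop
      (nhds (∫ u in Ioi (0:ℝ), (1 + u ^ p)⁻¹)) := by
  set C := ∫ u in Ioi (0:ℝ), (1 + u ^ p)⁻¹ with hC
  set J := fun x : ℝ => ∫ u in Ioi (x ^ (-δ)), (1 + u ^ p)⁻¹ with hJ
  have hint := aux_integrable hp
  have key : ∀ x : ℝ, 1 ≤ x → C - x ^ (-δ) ≤ J x ∧ J x ≤ C := by
    intro x hx
    have hx0 : (0:ℝ) < x := by linarith
    have ha0 : (0:ℝ) < x ^ (-δ) := Real.rpow_pos_of_pos hx0 _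
    have hsplit : C = (∫ u in Ioc (0:ℝ) (x ^ (-δ)), (1 + u ^ p)⁻¹) + J x := by
      rw [hC, ← Ioc_union_Ioi_eq_Ioi ha0.le,
        setIntegral_union (Ioc_disjoint_Ioi le_rfl) measurableSet_Ioi
          (hint.mono_set (by intro u hu; exact hu.1))
          (hint.mono_set (by intro u hu; exact lt_trans ha0 hu))]
    have hnn : (0:ℝ) ≤ ∫ u in Ioc (0:ℝ) (x ^ (-δ)), (1 + u ^ p)⁻¹ := by
      apply setIntegral_nonneg measurableSet_Ioc
      intro u hu
      have : (0:ℝ) ≤ u ^ p := Real.rpow_nonneg hu.1.le p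
      positivity
    have hub : (∫ u in Ioc (0:ℝ) (x ^ (-δ)), (1 + u ^ p)⁻¹) ≤ x ^ (-δ) := by
      have h1 : (∫ u in Ioc (0:ℝ) (x ^ (-δ)), (1 + u ^ p)⁻¹)
          ≤ ∫ _ in Ioc (0:ℝ) (x ^ (-δ)), (1:ℝ) := by
        apply setIntegral_mono_on (hint.mono_set (by intro u hu; exact hu.1))
          (integrableOn_const measure_Ioc_lt_top.ne) measurableSet_Ioc
        intro u hu
        have h0 : (0:ℝ) ≤ u ^ p := Real.rpow_nonneg hu.1.le p
        rw [inv_le_one_iff₀]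
        right; linarith
      rw [setIntegral_const, smul_eq_mul, mul_one, Real.volume_real_Ioc_of_le (by linarith)] at h1
      linarith
    constructor
    · linarith [hsplit, hub]
    · linarith [hsplit, hnn]
  have h1 : Tendsto (fun x : ℝ => C - x ^ (-δ)) atTop (nhds C) := by
    simpa using tendsto_const_nhds.sub (tendsto_rpow_neg_atTop hδ)
  refine tendsto_of_tendsto_of_tendsto_of_le_of_le' h1 tendsto_const_nhds ?_ ?_
  · filter_upwards [eventually_ge_atTop (1:ℝ)] with x hx using (key x hx).1
  · filter_upwards [eventually_ge_atTop (1:ℝ)] with x hx using (key x hx).2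

/-- For every `α > 2`, `lim_{x→∞} x^(2/α)·P_α(x) = (α/(2π))·sin(2π/α)`;
the lower bound of Lemma 2 is asymptotically tight as `x → ∞`. -/
theorem sir_coverage_tail_asymptotics (α : ℝ) (hα : 2 < α) :
    Filter.Tendsto (fun x : ℝ => x ^ (2 / α) * Pcov α x) Filter.atTop
      (nhds ((α / (2 * π)) * Real.sin (2 * π / α))) := by
  have hα0 : (0:ℝ) < α := by linarith
  set δ : ℝ := 2 / α with hδdef
  set p : ℝ := α / 2 with hpdef
  have hp : 1 < p := by rw [hpdef]; linarith
  have hδ0 : 0 < δ := by rw [hδdef]; positivity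
  have hδ1 : δ < 1 := by rw [hδdef, div_lt_one hα0]; linarith
  have hpδ : p * δ = 1 := by rw [hpdef, hδdef]; field_simp
  set C : ℝ := ∫ u in Ioi (0:ℝ), (1 + u ^ p)⁻¹ with hCdef
  have hsin : 0 < Real.sin (π * δ) :=
    Real.sin_pos_of_pos_of_lt_pi (by positivity)
      (by nlinarith [Real.pi_pos])
  have hCval : p * C = π / Real.sin (π * δ) := by
    rw [hCdef, ← subst2 hp hpδ, ← subst1 hδ0 hδ1, beta_val hδ0 hδ1]
  have hCpos : 0 < C := by
    have hπ : 0 < π / Real.sin (π * δ) := div_pos Real.pi_pos hsin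
    nlinarith
  have htarget : (α / (2 * π)) * Real.sin (2 * π / α) = C⁻¹ := by
    have hπδ : (2:ℝ) * π / α = π * δ := by rw [hδdef]; ring
    rw [hπδ]
    have : C = π / Real.sin (π * δ) / p := by field_simp at hCval ⊢; linarith
    rw [this, hpdef]
    field_simp
  rw [htarget]
  set J : ℝ → ℝ := fun x => ∫ u in Ioi (x ^ (-δ)), (1 + u ^ p)⁻¹ with hJdef
  have hJ : Tendsto J atTop (nhds C) := tail_tendsto hp hδ0
  have hmain : Tendsto (fun x : ℝ => (x ^ (-δ) + J x)⁻¹) atTop (nhds C⁻¹) := by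
    have := ((tendsto_rpow_neg_atTop hδ0).add hJ).inv₀ (by simpa using hCpos.ne')
    simpa using this
  apply hmain.congr'
  filter_upwards [eventually_ge_atTop (1:ℝ)] with x hx
  have hx0 : (0:ℝ) < x := by linarith
  have hxd : (0:ℝ) < x ^ δ := Real.rpow_pos_of_pos hx0 δ
  have hkey : x ^ δ * x ^ (-δ) = 1 := by rw [← Real.rpow_add hx0]; norm_num
  have hJnn : 0 ≤ J x := by
    apply setIntegral_nonneg measurableSet_Ioi
    intro u hu
    have hu0 : (0:ℝ) < u := lt_trans (Real.rpow_pos_of_pos hx0 _) hu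
    have : (0:ℝ) ≤ u ^ p := Real.rpow_nonneg hu0.le p
    positivity
  have hPcov : Pcov α x = (1 + x ^ δ * J x)⁻¹ := by
    rw [Pcov, hcov, show α / 2 = p from rfl, subst3 hp hpδ hx0]
  rw [hPcov]
  have e1 : 1 + x ^ δ * J x = x ^ δ * (x ^ (-δ) + J x) := by
    rw [mul_add, hkey]
  rw [e1, mul_inv, ← mul_assoc, mul_inv_cancel₀ hxd.ne', one_mul]
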